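/- For every run r there exists a strategy profile s such that r is the unique run consistent with s, provided along every run some player is active infinitely often. -/
import Mathlib


/-- Stages: non-positive integers. -/
abbrev Stage : Type := {n : ℤ // n ≤ 0}

/-- A run assigns an action to each stage. -/
abbrev Run (A : Type) : Type := Stage → A

/-- A position at stage `n` records the actions at all stages `k < n`. -/
abbrev Position (A : Type) (n : ℤ) : Type := {k : ℤ // k < n} → A

/-- The space of all positions. -/
abbrev Pos (A : Type) : Type := Σ n : Stage, Position A n.1

/-- The position induced by a run `r` at stage `n`. -/
def restrictRun {A : Type} (r : Run A) (n : Stage) : Position A n.1 :=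
  fun k => r ⟨k.1, le_trans k.2.le n.2⟩

/-- A run `r` is consistent with a strategy `si` of player `i`: at every stage where `i` is the
active player along `r`, the action of `r` is the one recommended by `si`. -/
def ConsistentI {I A : Type} (ι : Pos A → I) (i : I) (si : Pos A → A) (r : Run A) : Prop :=
  ∀ n : Stage, ι ⟨n, restrictRun r n⟩ = i → r n = si ⟨n, restrictRun r n⟩

/-- A run `r` is consistent with a strategy profile `s`. -/
def ConsistentP {I A : Type} (ι : Pos A → I) (s : I → Pos A → A) (r : Run A) : Prop :=
  ∀ n : Stage, r n = s (ι ⟨n, restrictRun r n⟩) ⟨n, restrictRun r n⟩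

/-- Two runs differ in at most finitely many coordinates (same segment). -/
def FinDiff {A : Type} (r r' : Run A) : Prop := {k : Stage | r k ≠ r' k}.Finite

/-- Player `i` is active infinitely often along the run `r`. -/
def ActiveIO {I A : Type} (ι : Pos A → I) (i : I) (r : Run A) : Prop :=
  {n : Stage | ι ⟨n, restrictRun r n⟩ = i}.Infinite

/-- if along every run some player is active infinitely often, then for every run
`r` there is a strategy profile whose unique consistent run is `r`. -/
theorem profile_singling_out_run (I A : Type) [Fintype I] [Nonempty I] [Fintype A]
    (hA : 2 ≤ Fintype.card A) (ι : Pos A → I)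
    (hact : ∀ r : Run A, ∃ j : I, ActiveIO ι j r) (r : Run A) :
    ∃ s : I → Pos A → A, ConsistentP ι s r ∧ ∀ r' : Run A, ConsistentP ι s r' → r' = r := by
  classical
  obtain ⟨a, b, hab⟩ := Fintype.exists_pair_of_one_lt_card (by omega : 1 < Fintype.card A)
  -- the strategy: follow `r` on `r`'s positions; off the run, play `a` iff the position
  -- differs from `a` infinitely often in the past, otherwise `b`.
  refine ⟨fun _ p => if p.2 = restrictRun r p.1 then r p.1
      else if {k : {k : ℤ // k < p.1.1} | p.2 k ≠ a}.Infinite then a else b, ?_, ?_⟩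
  · intro n
    simp [ConsistentP]
  · intro r' h
    by_contra hne
    have hD : {k : Stage | r' k ≠ r k}.Nonempty := by
      rcases Function.ne_iff.mp hne with ⟨k, hk⟩
      exact ⟨k, hk⟩
    set D : Set Stage := {k : Stage | r' k ≠ r k} with hDdef
    have hfin_above : ∀ n : Stage, ({k : Stage | n.1 ≤ k.1} : Set Stage).Finite := by
      intro n
      have : ({k : Stage | n.1 ≤ k.1} : Set Stage) =
          (Subtype.val) ⁻¹' (Set.Icc n.1 0) := by
        ext k; simp [k.2]
      rw [this]
      exact (Set.finite_Icc n.1 0).preimage (Subtype.val_injective.injOn)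
    by_cases hDf : D.Finite
    · -- finitely many differences: take the minimal one, contradiction
      obtain ⟨m, hmD, hmin⟩ := Set.exists_min_image D id hDf hD
      have hpos : restrictRun r' m = restrictRun r m := by
        funext k
        by_contra hk
        have hkD : (⟨k.1, le_trans k.2.le m.2⟩ : Stage) ∈ D := hk
        have := hmin _ hkD
        simp only [id] at this
        have : m.1 ≤ k.1 := this
        exact absurd k.2 (not_lt.mpr this)
      have := h m
      rw [hpos] at this
      simp only [if_pos rfl] at this
      exact hmD this
    · -- infinitely many differences: every position of `r'` is off the run
      have hDi : D.Infinite := hDf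
      have hoff : ∀ n : Stage, restrictRun r' n ≠ restrictRun r n := by
        intro n heq
        obtain ⟨k, hkD, hklt⟩ : ∃ k ∈ D, k.1 < n.1 := by
          by_contra hc
          push_neg at hc
          exact hDi ((hfin_above n).subset (fun k hk => hc k hk))
        have := congrFun heq ⟨k.1, hklt⟩
        simp only [restrictRun] at this
        have hk' : (⟨k.1, le_trans hklt.le n.2⟩ : Stage) = k := Subtype.ext rfl
        rw [hk'] at this
        exact hkD this
      have hval : ∀ n : Stage, r' n =
          if {k : {k : ℤ // k < n.1} | restrictRun r' n k ≠ a}.Infinite then a else b := by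
        intro n
        have := h n
        simp only [if_neg (hoff n)] at this
        exact this
      set S : Set Stage := {k : Stage | r' k ≠ a} with hSdef
      have hinner : ∀ n : Stage,
          {k : {k : ℤ // k < n.1} | restrictRun r' n k ≠ a} =
          (fun k : {k : ℤ // k < n.1} => (⟨k.1, le_trans k.2.le n.2⟩ : Stage)) ⁻¹' S := by
        intro n; rfl
      have hinj : ∀ n : Stage, Function.Injective
          (fun k : {k : ℤ // k < n.1} => (⟨k.1, le_trans k.2.le n.2⟩ : Stage)) := by
        intro n k1 k2 hk
        simp only [Subtype.mk.injEq] at hk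
        exact Subtype.ext hk
      by_cases hSf : S.Finite
      · -- then the inner sets are always finite, so `r'` is constantly `b`, so `S` is infinite
        have hb : ∀ n : Stage, r' n = b := by
          intro n
          have hfin : ¬ {k : {k : ℤ // k < n.1} | restrictRun r' n k ≠ a}.Infinite := by
            rw [hinner n, Set.not_infinite]
            exact hSf.preimage ((hinj n).injOn)
          rw [hval n, if_neg hfin]
        have : S = Set.univ := by
          ext k; simp [hSdef, hb k, hab.symm]
        rw [this] at hSf
        have : Infinite Stage := Infinite.of_injective
          (fun m : ℕ => (⟨-(m : ℤ), by omega⟩ : Stage))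
          (fun m1 m2 hm => by
            have := congrArg Subtype.val hm
            simpa using this)
        exact Set.infinite_univ hSf
      · -- then the inner sets are always infinite, so `r'` is constantly `a`, so `S` is empty
        have hSi : S.Infinite := hSf
        have ha : ∀ n : Stage, r' n = a := by
          intro n
          have hinf : {k : {k : ℤ // k < n.1} | restrictRun r' n k ≠ a}.Infinite := by
            rw [hinner n]
            have hdiff : (S \ {k : Stage | n.1 ≤ k.1}).Infinite := hSi.diff (hfin_above n)
            have hsub : (S \ {k : Stage | n.1 ≤ k.1}) ⊆
                Set.range (fun k : {k : ℤ // k < n.1} => (⟨k.1, le_trans k.2.le n.2⟩ : Stage)) := by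
              rintro k ⟨hkS, hklt⟩
              simp only [Set.mem_setOf_eq, not_le] at hklt
              exact ⟨⟨k.1, hklt⟩, Subtype.ext rfl⟩
            have := (hdiff.preimage hsub)
            exact this.mono (Set.preimage_mono (Set.diff_subset))
          rw [hval n, if_pos hinf]
        have : S = ∅ := by
          ext k; simp [hSdef, ha k]
        rw [this] at hSi
        exact hSi Set.finite_empty
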